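/- Let p(t) = ξ t³ + (η + 3ζ²) t² + ξ t + η − ζ² with ξ > 0, −ξ + √3 η > 0. Then η > 0, ξ + √3 η > 0, and √3 ξ + η + 3ζ² > 0; moreover p has no real root in the interval (1/√3, ∞). -/
import Mathlib

open Real

theorem stmt_7 (ξ η ζ : ℝ) (p : ℝ → ℝ)
    (hp : ∀ t, p t = ξ * t^3 + (η + 3*ζ^2) * t^2 + ξ * t + η - ζ^2)
    (hξ : 0 < ξ) (hη : 0 < -ξ + Real.sqrt 3 * η) :
    0 < η ∧ 0 < ξ + Real.sqrt 3 * η ∧ 0 < Real.sqrt 3 * ξ + η + 3*ζ^2 ∧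
    ∀ t : ℝ, 1 / Real.sqrt 3 < t → p t ≠ 0 := by
  have hs : (0:ℝ) < Real.sqrt 3 := by positivity
  have hs2 : Real.sqrt 3 ^ 2 = 3 := Real.sq_sqrt (by norm_num)
  have hηpos : 0 < η := by nlinarith
  refine ⟨hηpos, by nlinarith, by positivity, ?_⟩
  intro t ht
  have ht0 : 0 < t := lt_trans (by positivity) ht
  have ht2 : 1/3 < t^2 := by
    have : (1 / Real.sqrt 3)^2 < t^2 := by
      apply pow_lt_pow_left₀ ht (by positivity)
      norm_num
    calc (1:ℝ)/3 = (1 / Real.sqrt 3)^2 := by rw [div_pow, hs2]; norm_num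
    _ < t^2 := this
  rw [hp]
  have hz : (0:ℝ) ≤ ζ^2 := sq_nonneg ζ
  nlinarith [mul_pos hξ ht0, mul_pos (mul_pos hξ ht0) (mul_pos ht0 ht0)]
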